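/- Let f : [−1,1]² → ℝ be a C² function with a critical point at the origin, such that neither the partial function y ↦ f(0,y) nor x ↦ f(x,0) is constant, and suppose there is C < ∞ such that for every (x,y) ∈ [−1,1]²: f(x,y) − inf_{x'∈[−1,1]} f(x',y) ≤ C|∂_x f(x,y)|² and sup_{y'∈[−1,1]} f(x,y') − f(x,y) ≤ C|∂_y f(x,y)|². Then there exists r > 0 such that for every initial condition z(0) in the open Euclidean ball B_r of radius r centered at the origin, the gradient descent-ascent flow z solving z'(t) = (−∂_x f(z(t)), ∂_y f(z(t))) converges to the origin as t → ∞. -/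

import Mathlib

open Set Filter

/-- Partial derivative in the first variable. -/
noncomputable def pdx (f : ℝ × ℝ → ℝ) (p : ℝ × ℝ) : ℝ :=
  deriv (fun x => f (x, p.2)) p.1

/-- Partial derivative in the second variable. -/
noncomputable def pdy (f : ℝ × ℝ → ℝ) (p : ℝ × ℝ) : ℝ :=
  deriv (fun y => f (p.1, y)) p.2

/-- The square `[-1,1]²`. -/
def Sq : Set (ℝ × ℝ) := Icc (-1) 1 ×ˢ Icc (-1) 1

set_option maxHeartbeats 1000000

open Topology

lemma antitone_aux {φ φ' : ℝ → ℝ} {a b : ℝ}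
    (hc : ContinuousOn φ (Icc a b))
    (hd : ∀ x ∈ Ioo a b, HasDerivAt φ (φ' x) x)
    (h0 : ∀ x ∈ Ioo a b, φ' x ≤ 0) : AntitoneOn φ (Icc a b) := by
  apply antitoneOn_of_deriv_nonpos (convex_Icc a b) hc
  · intro x hx; rw [interior_Icc] at hx
    exact (hd x hx).differentiableAt.differentiableWithinAt
  · intro x hx; rw [interior_Icc] at hx; rw [(hd x hx).deriv]; exact h0 x hx

lemma monotone_aux {φ φ' : ℝ → ℝ} {a b : ℝ}
    (hc : ContinuousOn φ (Icc a b))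
    (hd : ∀ x ∈ Ioo a b, HasDerivAt φ (φ' x) x)
    (h0 : ∀ x ∈ Ioo a b, 0 ≤ φ' x) : MonotoneOn φ (Icc a b) := by
  apply monotoneOn_of_deriv_nonneg (convex_Icc a b) hc
  · intro x hx; rw [interior_Icc] at hx
    exact (hd x hx).differentiableAt.differentiableWithinAt
  · intro x hx; rw [interior_Icc] at hx; rw [(hd x hx).deriv]; exact h0 x hx

lemma growth_lemma {q q1 : ℝ → ℝ} {s p C : ℝ} (hC : 0 < C) (hsp : s < p)
    (hcq : ContinuousOn q (Icc s p))
    (hcq1 : ContinuousOn q1 (Ioc s p))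
    (hd : ∀ x ∈ Ioc s p, HasDerivAt q (q1 x) x)
    (hq0 : q s = 0) (hpos : ∀ x ∈ Ioc s p, 0 < q x)
    (hPL : ∀ x ∈ Ioc s p, q x ≤ C * (q1 x)^2) :
    (p - s)^2 / (4*C) ≤ q p := by
  have hne : ∀ x ∈ Ioc s p, q1 x ≠ 0 := by
    intro x hx h0
    have := hPL x hx
    rw [h0] at this
    simp at this
    exact absurd this (not_le.2 (hpos x hx))
  -- q1 > 0 on Ioc s p
  have hq1pos : ∀ x ∈ Ioc s p, 0 < q1 x := by
    by_contra h
    push_neg at h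
    obtain ⟨x₀, hx₀, hx₀le⟩ := h
    have hx₀lt : q1 x₀ < 0 := lt_of_le_of_ne hx₀le (hne x₀ hx₀)
    have hneg : ∀ x ∈ Ioc s x₀, q1 x < 0 := by
      intro x hx
      by_contra hge
      push_neg at hge
      have hsub : Icc x x₀ ⊆ Ioc s p :=
        fun y hy => ⟨lt_of_lt_of_le hx.1 hy.1, le_trans hy.2 hx₀.2⟩
      have hzero : (0:ℝ) ∈ q1 '' Icc x x₀ := by
        apply intermediate_value_Icc' hx.2 (hcq1.mono hsub)
        constructor
        · exact hx₀lt.le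
        · exact hge
      obtain ⟨c, hc, hc0⟩ := hzero
      exact hne c (hsub hc) hc0
    have hanti : AntitoneOn q (Icc s x₀) := by
      apply antitone_aux (hcq.mono (Icc_subset_Icc le_rfl hx₀.2))
      · intro x hx
        exact hd x ⟨hx.1, hx.2.le.trans hx₀.2⟩
      · intro x hx
        exact (hneg x ⟨hx.1, hx.2.le⟩).le
    have : q x₀ ≤ q s := hanti (left_mem_Icc.2 hx₀.1.le) (right_mem_Icc.2 hx₀.1.le) hx₀.1.le
    rw [hq0] at this
    exact absurd this (not_le.2 (hpos x₀ hx₀))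
  -- sqrt growth
  set g : ℝ → ℝ := fun x => Real.sqrt (q x) - (x - s)/(2*Real.sqrt C) with hg
  have hqnn : ∀ x ∈ Icc s p, 0 ≤ q x := by
    intro x hx
    rcases eq_or_lt_of_le hx.1 with h | h
    · rw [← h, hq0]
    · exact (hpos x ⟨h, hx.2⟩).le
  have hgc : ContinuousOn g (Icc s p) := by
    apply ContinuousOn.sub
    · exact Real.continuous_sqrt.comp_continuousOn hcq
    · fun_prop
  have hgm : MonotoneOn g (Icc s p) := by
    apply monotone_aux hgc (φ' := fun x => 1/(2*Real.sqrt (q x)) * q1 x - 1/(2*Real.sqrt C))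
    · intro x hx
      have hx' : x ∈ Ioc s p := ⟨hx.1, hx.2.le⟩
      have h1 : HasDerivAt (fun y => Real.sqrt (q y)) (1/(2*Real.sqrt (q x)) * q1 x) x :=
        (Real.hasDerivAt_sqrt (ne_of_gt (hpos x hx'))).comp x (hd x hx')
      have h2 : HasDerivAt (fun y => (y - s)/(2*Real.sqrt C)) (1/(2*Real.sqrt C)) x := by
        have := ((hasDerivAt_id x).sub_const s).div_const (2*Real.sqrt C)
        simpa using this
      exact h1.sub h2
    · intro x hx
      have hx' : x ∈ Ioc s p := ⟨hx.1, hx.2.le⟩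
      have hqx := hpos x hx'
      have hq1x := hq1pos x hx'
      have hkey1 : Real.sqrt (q x) ≤ Real.sqrt C * q1 x := by
        have h2 : q x ≤ (Real.sqrt C * q1 x)^2 := by
          rw [mul_pow, Real.sq_sqrt hC.le]; exact hPL x hx'
        calc Real.sqrt (q x) ≤ Real.sqrt ((Real.sqrt C * q1 x)^2) := Real.sqrt_le_sqrt h2
          _ = Real.sqrt C * q1 x := Real.sqrt_sq (by positivity)
      have key : 1/(2*Real.sqrt C) ≤ 1/(2*Real.sqrt (q x)) * q1 x := by
        rw [div_mul_eq_mul_div, one_mul, div_le_div_iff₀ (by positivity) (by positivity), one_mul]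
        have hsC : 0 < Real.sqrt C := Real.sqrt_pos.2 hC
        nlinarith [Real.sqrt_pos.2 hqx]
      linarith
  have hgsp : g s ≤ g p := hgm (left_mem_Icc.2 hsp.le) (right_mem_Icc.2 hsp.le) hsp.le
  have hgs : g s = 0 := by simp [hg, hq0]
  rw [hgs] at hgsp
  have hsq : (p - s)/(2*Real.sqrt C) ≤ Real.sqrt (q p) := by
    simp only [hg] at hgsp; linarith
  have h2 := Real.sqrt_le_sqrt (le_refl (q p))
  have hps : 0 ≤ (p - s)/(2*Real.sqrt C) :=
    div_nonneg (by linarith) (by positivity)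
  have := (Real.le_sqrt hps (hqnn p (right_mem_Icc.2 hsp.le))).1 hsq
  calc (p - s)^2/(4*C) = ((p - s)/(2*Real.sqrt C))^2 := by
        rw [div_pow]
        congr 1
        rw [mul_pow]
        norm_num [Real.sq_sqrt hC.le]
    _ ≤ q p := this

lemma taylor_lemma {q q1 q2 : ℝ → ℝ} {s p κ : ℝ} (hsp : s ≤ p)
    (hcq : ContinuousOn q (Icc s p)) (hcq1 : ContinuousOn q1 (Icc s p))
    (hd : ∀ x ∈ Ioo s p, HasDerivAt q (q1 x) x)
    (hd1 : ∀ x ∈ Ioo s p, HasDerivAt q1 (q2 x) x)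
    (hq0 : q s = 0) (hq10 : q1 s = 0)
    (hκ : ∀ x ∈ Ioo s p, q2 x ≤ κ) :
    q p ≤ κ * (p - s)^2 / 2 := by
  have step1 : ∀ x ∈ Icc s p, q1 x ≤ κ * (x - s) := by
    have hanti : AntitoneOn (fun x => q1 x - κ * (x - s)) (Icc s p) := by
      apply antitone_aux (φ' := fun x => q2 x - κ)
      · exact hcq1.sub (by fun_prop)
      · intro x hx
        exact (hd1 x hx).sub (((hasDerivAt_id x).sub_const s).const_mul κ |>.congr_deriv (by ring))
      · intro x hx; linarith [hκ x hx]
    intro x hx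
    have := hanti (left_mem_Icc.2 hsp) hx hx.1
    simp [hq10] at this
    linarith
  have hanti2 : AntitoneOn (fun x => q x - κ * (x - s)^2 / 2) (Icc s p) := by
    apply antitone_aux (φ' := fun x => q1 x - κ * (x - s))
    · exact hcq.sub (by fun_prop)
    · intro x hx
      have h2 : HasDerivAt (fun x => κ * (x - s)^2 / 2) (κ * (x - s)) x := by
        have := (((hasDerivAt_id x).sub_const s).pow 2).const_mul κ |>.div_const 2
        refine this.congr_deriv ?_
        simp
        ring
      exact (hd x hx).sub h2
    · intro x hx
      have := step1 x ⟨hx.1.le, hx.2.le⟩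
      linarith
  have := hanti2 (left_mem_Icc.2 hsp) (right_mem_Icc.2 hsp) hsp
  simp [hq0] at this
  linarith

lemma oneD {q q1 q2 : ℝ → ℝ} {C b : ℝ} (hC : 0 < C) (hb0 : 0 < b) (hb1 : b < 1)
    (hd1 : ∀ x ∈ Ioo (-1:ℝ) 1, HasDerivAt q (q1 x) x)
    (hd2 : ∀ x ∈ Ioo (-1:ℝ) 1, HasDerivAt q1 (q2 x) x)
    (hc2 : ContinuousOn q2 (Ioo (-1:ℝ) 1))
    (hq0 : q 0 = 0) (hnn : ∀ x ∈ Icc (-1:ℝ) 1, 0 ≤ q x)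
    (hPL : ∀ x ∈ Icc (-1:ℝ) 1, q x ≤ C * (q1 x)^2)
    (hpos : 0 < q b) :
    1/(2*C) ≤ q2 0 := by
  by_contra hcon
  push_neg at hcon
  -- the maximal flat interval [0, v]
  set Z : Set ℝ := {x ∈ Icc 0 b | ∀ y ∈ Icc 0 x, q y = 0} with hZ
  have h0Z : (0:ℝ) ∈ Z := by
    refine ⟨⟨le_rfl, hb0.le⟩, ?_⟩
    intro y hy
    have : y = 0 := le_antisymm hy.2 hy.1
    rw [this, hq0]
  have hbdd : BddAbove Z := ⟨b, fun x hx => hx.1.2⟩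
  set v := sSup Z with hv
  have hv0 : 0 ≤ v := le_csSup hbdd h0Z
  have hvb : v ≤ b := csSup_le ⟨0, h0Z⟩ (fun x hx => hx.1.2)
  have hv1 : v < 1 := lt_of_le_of_lt hvb hb1
  have hvIoo : v ∈ Ioo (-1:ℝ) 1 := ⟨by linarith, hv1⟩
  have hqflat : ∀ y ∈ Ico 0 v, q y = 0 := by
    intro y hy
    obtain ⟨x, hxZ, hyx⟩ := exists_lt_of_lt_csSup ⟨0, h0Z⟩ hy.2
    exact hxZ.2 y ⟨hy.1, hyx.le⟩
  have hqv : q v = 0 := by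
    rcases eq_or_lt_of_le hv0 with h | h
    · rw [← h, hq0]
    · have hcont : ContinuousAt q v := (hd1 v hvIoo).continuousAt
      have hcl : v ∈ closure (Ico 0 v) := by
        rw [closure_Ico (ne_of_lt h)]; exact ⟨hv0, le_rfl⟩
      have hne : (𝓝[Ico 0 v] v).NeBot := mem_closure_iff_nhdsWithin_neBot.1 hcl
      have h1 : Tendsto q (𝓝[Ico 0 v] v) (𝓝 (q v)) :=
        hcont.continuousWithinAt.tendsto
      have h2 : Tendsto q (𝓝[Ico 0 v] v) (𝓝 0) := by
        apply Tendsto.congr' _ tendsto_const_nhds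
        filter_upwards [eventually_mem_nhdsWithin] with y hy
        exact (hqflat y hy).symm
      exact tendsto_nhds_unique h1 h2
  have hvltb : v < b := by
    rcases eq_or_lt_of_le hvb with h | h
    · exfalso; rw [h] at hqv; exact absurd hqv (ne_of_gt hpos)
    · exact h
  -- q2 v < 1/(2 C)
  have hκv : q2 v < 1/(2*C) := by
    rcases eq_or_lt_of_le hv0 with h | h
    · rw [← h]; exact hcon
    · -- v > 0 : flat interval, q2 v = 0
      have hq1flat : ∀ x ∈ Ioo 0 v, q1 x = 0 := by
        intro x hx
        have hxI : x ∈ Ioo (-1:ℝ) 1 := ⟨by linarith [hx.1], lt_trans hx.2 hv1⟩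
        have h0 : HasDerivAt q 0 x := by
          apply (hasDerivAt_const x (0:ℝ)).congr_of_eventuallyEq
          filter_upwards [Ioo_mem_nhds hx.1 hx.2] with y hy
          exact hqflat y ⟨hy.1.le, hy.2⟩
        exact (hd1 x hxI).unique h0
      have hq1v : q1 v = 0 := by
        have hmin : IsLocalMin q v := by
          have : ∀ᶠ y in 𝓝 v, q v ≤ q y := by
            filter_upwards [Icc_mem_nhds (by linarith : (-1:ℝ) < v) hv1] with y hy
            rw [hqv]; exact hnn y hy
          exact this
        exact hmin.hasDerivAt_eq_zero (hd1 v hvIoo)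
      have hq2v : q2 v = 0 := by
        have hU : UniqueDiffWithinAt ℝ (Ioo 0 v) v := by
          apply uniqueDiffWithinAt_convex (convex_Ioo 0 v)
          · rw [interior_Ioo]; exact nonempty_Ioo.2 h
          · rw [closure_Ioo (ne_of_lt h)]; exact ⟨h.le, le_rfl⟩
        have hA : HasDerivWithinAt q1 (q2 v) (Ioo 0 v) v := (hd2 v hvIoo).hasDerivWithinAt
        have hB : HasDerivWithinAt q1 0 (Ioo 0 v) v := by
          apply (hasDerivWithinAt_const v _ (0:ℝ)).congr
          · intro y hy; exact hq1flat y hy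
          · exact hq1v
        have e1 := hA.derivWithin hU
        have e2 := hB.derivWithin hU
        linarith
      rw [hq2v]; positivity
  set κ' := (q2 v + 1/(2*C))/2 with hκ'
  have hκ'1 : q2 v < κ' := by rw [hκ']; linarith
  have hκ'2 : κ' < 1/(2*C) := by rw [hκ']; linarith
  -- neighborhood where q2 < κ'
  have hc2v : ContinuousAt q2 v := hc2.continuousAt (isOpen_Ioo.mem_nhds hvIoo)
  have hev : ∀ᶠ x in 𝓝 v, q2 x < κ' := hc2v.eventually_lt continuousAt_const hκ'1
  obtain ⟨δ0, hδ0, hball⟩ := Metric.eventually_nhds_iff.1 hev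
  set δ := min (δ0/2) (b - v) with hδdef
  have hδ : 0 < δ := lt_min (by linarith) (by linarith)
  have hδb : v + δ ≤ b := by
    have := min_le_right (δ0/2) (b - v); simp only [hδdef]; linarith
  have hκbound : ∀ x ∈ Icc v (v+δ), q2 x < κ' := by
    intro x hx
    apply hball
    rw [Real.dist_eq, abs_sub_lt_iff]
    have h1 : δ ≤ δ0/2 := min_le_left _ _
    constructor <;> [linarith [hx.2]; linarith [hx.1]]
  -- find positivity point p in (v, v+δ]
  have hxstar : v + δ ∉ Z := by
    intro hmem
    have : v + δ ≤ v := le_csSup hbdd hmem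
    linarith
  obtain ⟨p, hpmem, hpne⟩ : ∃ y ∈ Icc (0:ℝ) (v+δ), q y ≠ 0 := by
    by_contra hall
    push_neg at hall
    exact hxstar ⟨⟨by linarith, hδb⟩, hall⟩
  have hpIcc1 : p ∈ Icc (-1:ℝ) 1 := by
    constructor <;> [linarith [hpmem.1]; linarith [hpmem.2, hδb, hb1.le]]
  have hppos : 0 < q p := lt_of_le_of_ne (hnn p hpIcc1) (Ne.symm hpne)
  have hpv : v < p := by
    by_contra hle
    push_neg at hle
    rcases eq_or_lt_of_le hle with h | h
    · rw [← h] at hqv; exact hpne hqv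
    · exact hpne (hqflat p ⟨hpmem.1, h⟩)
  have hpδ : p ≤ v + δ := hpmem.2
  have hp1 : p < 1 := by linarith [hδb, hb1]
  -- subset facts
  have hsub1 : Icc v p ⊆ Ioo (-1:ℝ) 1 := fun x hx => ⟨by linarith [hx.1], lt_of_le_of_lt hx.2 hp1⟩
  have hcq : ContinuousOn q (Icc v p) :=
    fun x hx => ((hd1 x (hsub1 hx)).continuousAt).continuousWithinAt
  -- last zero before p
  set W : Set ℝ := {x ∈ Icc v p | q x = 0} with hW
  have hWclosed : IsClosed W := by
    have : W = Icc v p ∩ q ⁻¹' {0} := by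
      ext x; simp [hW]
    rw [this]
    exact hcq.preimage_isClosed_of_isClosed isClosed_Icc isClosed_singleton
  have hWne : W.Nonempty := ⟨v, ⟨⟨le_rfl, hpv.le⟩, hqv⟩⟩
  have hWbdd : BddAbove W := ⟨p, fun x hx => hx.1.2⟩
  set s' := sSup W with hs'
  have hs'mem : s' ∈ W := hWclosed.csSup_mem hWne hWbdd
  have hs'v : v ≤ s' := hs'mem.1.1
  have hs'p : s' < p := lt_of_le_of_ne hs'mem.1.2 (fun h => hpne (h ▸ hs'mem.2))
  have hqs' : q s' = 0 := hs'mem.2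
  have hs'Ioo : s' ∈ Ioo (-1:ℝ) 1 := hsub1 ⟨hs'v, hs'mem.1.2⟩
  have hqposIoc : ∀ x ∈ Ioc s' p, 0 < q x := by
    intro x hx
    have hxIcc1 : x ∈ Icc (-1:ℝ) 1 := by
      constructor <;> [linarith [hs'Ioo.1, hx.1]; linarith [hx.2, hp1.le]]
    rcases lt_or_eq_of_le (hnn x hxIcc1) with h | h
    · exact h
    · exfalso
      have : x ∈ W := ⟨⟨le_trans hs'v hx.1.le, hx.2⟩, h.symm⟩
      exact absurd (le_csSup hWbdd this) (not_le.2 hx.1)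
  have hq1s' : q1 s' = 0 := by
    have hmin : IsLocalMin q s' := by
      have : ∀ᶠ y in 𝓝 s', q s' ≤ q y := by
        filter_upwards [Icc_mem_nhds hs'Ioo.1 hs'Ioo.2] with y hy
        rw [hqs']; exact hnn y hy
      exact this
    exact hmin.hasDerivAt_eq_zero (hd1 s' hs'Ioo)
  have hsub2 : Icc s' p ⊆ Ioo (-1:ℝ) 1 :=
    fun x hx => ⟨by linarith [hs'Ioo.1, hx.1], lt_of_le_of_lt hx.2 hp1⟩
  have hsub3 : ∀ x ∈ Icc s' p, x ∈ Icc (-1:ℝ) 1 :=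
    fun x hx => ⟨(hsub2 hx).1.le, (hsub2 hx).2.le⟩
  -- growth bound
  have hgrow : (p - s')^2/(4*C) ≤ q p := by
    apply growth_lemma (q1 := q1) hC hs'p
    · exact fun x hx => ((hd1 x (hsub2 hx)).continuousAt).continuousWithinAt
    · exact fun x hx => ((hd2 x (hsub2 ⟨hx.1.le, hx.2⟩)).continuousAt).continuousWithinAt
    · exact fun x hx => hd1 x (hsub2 ⟨hx.1.le, hx.2⟩)
    · exact hqs'
    · exact hqposIoc
    · exact fun x hx => hPL x (hsub3 x ⟨hx.1.le, hx.2⟩)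
  -- taylor bound
  have htay : q p ≤ κ' * (p - s')^2 / 2 := by
    apply taylor_lemma hs'p.le
    · exact fun x hx => ((hd1 x (hsub2 hx)).continuousAt).continuousWithinAt
    · exact fun x hx => ((hd2 x (hsub2 hx)).continuousAt).continuousWithinAt
    · exact fun x hx => hd1 x (hsub2 ⟨hx.1.le, hx.2.le⟩)
    · exact fun x hx => hd2 x (hsub2 ⟨hx.1.le, hx.2.le⟩)
    · exact hqs'
    · exact hq1s'
    · intro x hx
      apply le_of_lt
      apply hκbound
      constructor
      · linarith [hs'v, hx.1]
      · linarith [hx.2, hpδ]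
  -- contradiction
  have hsq : 0 < (p - s')^2 := by
    have : 0 < p - s' := by linarith
    positivity
  have h1 : κ' * (p - s')^2 / 2 < (p - s')^2/(4*C) := by
    rw [div_lt_div_iff₀ (by norm_num) (by positivity)]
    calc κ' * (p - s')^2 * (4*C) < (1/(2*C)) * (p - s')^2 * (4*C) := by
          apply mul_lt_mul_of_pos_right _ (by positivity)
          exact mul_lt_mul_of_pos_right hκ'2 hsq
      _ = (p - s')^2 * 2 := by field_simp; ring
  linarith

lemma slice_bound {g : ℝ → ℝ} {C : ℝ}
    (hg : ContDiffOn ℝ 2 g (Icc (-1:ℝ) 1))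
    (hg0 : g 0 = 0)
    (hnn : ∀ x ∈ Icc (-1:ℝ) 1, 0 ≤ g x)
    (hPL : ∀ x ∈ Icc (-1:ℝ) 1, g x ≤ C * (deriv g x)^2)
    (hex : ∃ x ∈ Icc (-1:ℝ) 1, g x ≠ 0) :
    0 < C ∧ 1/(2*C) ≤ deriv (deriv g) 0 := by
  have hIoo : (Ioo (-1:ℝ) 1) ⊆ Icc (-1:ℝ) 1 := Ioo_subset_Icc_self
  have hgo : ContDiffOn ℝ 2 g (Ioo (-1:ℝ) 1) := hg.mono hIoo
  have hd1 : ∀ x ∈ Ioo (-1:ℝ) 1, HasDerivAt g (deriv g x) x := by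
    intro x hx
    exact ((hgo.differentiableOn (by norm_num)).differentiableAt
      (isOpen_Ioo.mem_nhds hx)).hasDerivAt
  have hg1 : ContDiffOn ℝ 1 (deriv g) (Ioo (-1:ℝ) 1) :=
    hgo.deriv_of_isOpen isOpen_Ioo (by norm_num)
  have hd2 : ∀ x ∈ Ioo (-1:ℝ) 1, HasDerivAt (deriv g) (deriv (deriv g) x) x := by
    intro x hx
    exact ((hg1.differentiableOn (by norm_num)).differentiableAt
      (isOpen_Ioo.mem_nhds hx)).hasDerivAt
  have hc2 : ContinuousOn (deriv (deriv g)) (Ioo (-1:ℝ) 1) :=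
    hg1.continuousOn_deriv_of_isOpen isOpen_Ioo le_rfl
  -- find interior positivity point
  obtain ⟨x₀, hx₀, hx₀ne⟩ := hex
  have hx₀pos : 0 < g x₀ := lt_of_le_of_ne (hnn x₀ hx₀) (Ne.symm hx₀ne)
  obtain ⟨b, hbI, hbpos⟩ : ∃ b ∈ Ioo (-1:ℝ) 1, 0 < g b := by
    have hcw : ContinuousWithinAt g (Ioo (-1:ℝ) 1) x₀ :=
      ((hg.continuousOn x₀ hx₀).mono hIoo)
    have hcl : x₀ ∈ closure (Ioo (-1:ℝ) 1) := by
      rw [closure_Ioo (by norm_num : (-1:ℝ) ≠ 1)]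
      exact hx₀
    have hnb : (𝓝[Ioo (-1:ℝ) 1] x₀).NeBot := mem_closure_iff_nhdsWithin_neBot.1 hcl
    have hev : ∀ᶠ y in 𝓝[Ioo (-1:ℝ) 1] x₀, 0 < g y :=
      hcw.eventually (isOpen_Ioi.eventually_mem hx₀pos)
    obtain ⟨b, hb1, hb2⟩ := (hev.and eventually_mem_nhdsWithin).exists
    exact ⟨b, hb2, hb1⟩
  have hb0 : b ≠ 0 := fun h => by rw [h, hg0] at hbpos; exact lt_irrefl 0 hbpos
  have hC : 0 < C := by
    have h1 := hPL b (hIoo hbI)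
    nlinarith [sq_nonneg (deriv g b)]
  refine ⟨hC, ?_⟩
  rcases lt_or_gt_of_ne hb0 with hblt | hbgt
  · -- b < 0 : reflect
    have hres := oneD (q := fun x => g (-x)) (q1 := fun x => -(deriv g (-x)))
      (q2 := fun x => deriv (deriv g) (-x)) hC (show (0:ℝ) < -b by linarith) (by linarith [hbI.1])
      ?_ ?_ ?_ ?_ ?_ ?_ ?_
    · simpa using hres
    · intro x hx
      have hnx : -x ∈ Ioo (-1:ℝ) 1 := by constructor <;> [linarith [hx.2]; linarith [hx.1]]
      have := (hd1 (-x) hnx).comp x (hasDerivAt_neg x)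
      simpa [Function.comp_def] using this.neg.neg
    · intro x hx
      have hnx : -x ∈ Ioo (-1:ℝ) 1 := by constructor <;> [linarith [hx.2]; linarith [hx.1]]
      have := ((hd2 (-x) hnx).comp x (hasDerivAt_neg x)).neg
      simpa [Function.comp_def, Pi.neg_def] using this
    · exact hc2.comp continuousOn_neg (fun x hx => by
        constructor <;> [linarith [hx.2]; linarith [hx.1]])
    · simpa using hg0
    · intro x hx
      exact hnn (-x) (by constructor <;> [linarith [hx.2]; linarith [hx.1]])
    · intro x hx
      have := hPL (-x) (by constructor <;> [linarith [hx.2]; linarith [hx.1]])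
      simpa using this
    · simpa using hbpos
  · exact oneD hC hbgt hbI.2 hd1 hd2 hc2 hg0 hnn hPL hbpos

lemma dynamics_lemma (f : ℝ × ℝ → ℝ) (c ρ : ℝ) (hc : 0 < c) (hρ : 0 < ρ)
    (hball : ∀ p : ℝ×ℝ, p.1^2 + p.2^2 < ρ^2 →
      -(p.1) * pdx f p + p.2 * pdy f p ≤ -(c) * (p.1^2 + p.2^2)) :
    ∀ z : ℝ → ℝ × ℝ,
      (z 0).1 ^ 2 + (z 0).2 ^ 2 < ρ ^ 2 →
      (∀ t ∈ Ici (0 : ℝ), z t ∈ Sq ∧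
        HasDerivWithinAt z (-(pdx f (z t)), pdy f (z t)) (Ici 0) t) →
      Tendsto z atTop (nhds (0, 0)) := by
  intro z hz0 hz
  set V : ℝ → ℝ := fun t => (z t).1^2 + (z t).2^2 with hVdef
  set VD : ℝ → ℝ := fun t =>
    2*((z t).1 * (-(pdx f (z t)))) + 2*((z t).2 * (pdy f (z t))) with hVDdef
  have hVc : ContinuousOn V (Ici 0) := by
    intro t ht
    have h1 : ContinuousWithinAt z (Ici 0) t := (hz t ht).2.continuousWithinAt
    exact ((h1.fst.pow 2).add (h1.snd.pow 2))
  have hVD : ∀ t ∈ Ioi (0:ℝ), HasDerivAt V (VD t) t := by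
    intro t ht
    have hzt : HasDerivAt z (-(pdx f (z t)), pdy f (z t)) t :=
      ((hz t (mem_Ici.2 (le_of_lt ht))).2).hasDerivAt (Ici_mem_nhds ht)
    have hx : HasDerivAt (fun s => (z s).1) (-(pdx f (z t))) t := by
      have := ((ContinuousLinearMap.fst ℝ ℝ ℝ).hasFDerivAt).comp_hasDerivAt t hzt
      simpa [Function.comp_def] using this
    have hy : HasDerivAt (fun s => (z s).2) (pdy f (z t)) t := by
      have := ((ContinuousLinearMap.snd ℝ ℝ ℝ).hasFDerivAt).comp_hasDerivAt t hzt
      simpa [Function.comp_def] using this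
    have hcomb := (hx.pow 2).add (hy.pow 2)
    refine hcomb.congr_deriv ?_
    simp only [hVDdef]
    ring
  have hVnn : ∀ t, 0 ≤ V t := fun t => by positivity
  have hVDle : ∀ t ∈ Ioi (0:ℝ), V t < ρ^2 → VD t ≤ -(2*c) * V t := by
    intro t ht hVt
    have h1 := hball (z t) hVt
    have h2 : VD t = 2 * (-((z t).1) * pdx f (z t) + (z t).2 * pdy f (z t)) := by
      simp only [hVDdef]; ring
    rw [h2]
    simp only [hVdef]
    nlinarith [h1]
  have claim1 : ∀ t ∈ Ici (0:ℝ), V t < ρ^2 := by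
    by_contra hcontra
    push_neg at hcontra
    obtain ⟨T₀, hT₀0, hT₀⟩ := hcontra
    set B := Ici (0:ℝ) ∩ V ⁻¹' (Ici (ρ^2)) with hBdef
    have hBne : B.Nonempty := ⟨T₀, hT₀0, hT₀⟩
    have hBbdd : BddBelow B := ⟨0, fun t ht => ht.1⟩
    have hBclosed : IsClosed B :=
      hVc.preimage_isClosed_of_isClosed isClosed_Ici isClosed_Ici
    have hTB : sInf B ∈ B := hBclosed.csInf_mem hBne hBbdd
    set T := sInf B with hTdef
    have hT0 : 0 < T := by
      rcases eq_or_lt_of_le (mem_Ici.1 hTB.1) with h | h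
      · exfalso
        have : V T ∈ Ici (ρ^2) := hTB.2
        rw [← h] at this
        exact absurd hz0 (not_lt.2 this)
      · exact h
    have hltT : ∀ t ∈ Ico (0:ℝ) T, V t < ρ^2 := by
      intro t ht
      by_contra h
      push_neg at h
      exact absurd (csInf_le hBbdd ⟨ht.1, h⟩) (not_le.2 ht.2)
    have hanti : AntitoneOn V (Icc 0 T) := by
      apply antitone_aux (φ' := VD) (hVc.mono Icc_subset_Ici_self)
      · intro t ht; exact hVD t ht.1
      · intro t ht
        have h1 := hVDle t ht.1 (hltT t ⟨ht.1.le, ht.2⟩)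
        nlinarith [hVnn t]
    have hVT : V T ≤ V 0 := hanti (left_mem_Icc.2 hT0.le) (right_mem_Icc.2 hT0.le) hT0.le
    have : V T < ρ^2 := lt_of_le_of_lt hVT hz0
    exact absurd hTB.2 (not_le.2 this)
  -- exponential decay
  have hexp : ∀ t : ℝ, HasDerivAt (fun t => Real.exp ((2*c)*t)) ((2*c) * Real.exp ((2*c)*t)) t := by
    intro t
    have h0 : HasDerivAt (fun s : ℝ => (2*c)*s) (2*c) t := by
      simpa using (hasDerivAt_id t).const_mul (2*c)
    have h1 := (Real.hasDerivAt_exp ((2*c)*t)).comp t h0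
    have h2 : HasDerivAt (fun s : ℝ => Real.exp ((2*c)*s)) (Real.exp ((2*c)*t) * (2*c)) t := h1
    convert h2 using 1
    ring
  have hanti2 : AntitoneOn (fun t => V t * Real.exp ((2*c)*t)) (Ici 0) := by
    apply antitoneOn_of_deriv_nonpos (convex_Ici 0)
    · exact hVc.mul (Real.continuous_exp.comp (continuous_const.mul continuous_id)).continuousOn
    · intro t ht
      rw [interior_Ici] at ht
      exact (((hVD t ht).mul (hexp t)).differentiableAt).differentiableWithinAt
    · intro t ht
      rw [interior_Ici] at ht
      rw [show (fun t => V t * Real.exp ((2*c)*t)) = V * fun t => Real.exp ((2*c)*t) from rfl, ((hVD t ht).mul (hexp t)).deriv]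
      have h1 := hVDle t ht (claim1 t (mem_Ici.2 (le_of_lt ht)))
      have h2 : 0 < Real.exp ((2*c)*t) := Real.exp_pos _
      nlinarith [hVnn t]
  have hVexp : ∀ t ∈ Ici (0:ℝ), V t ≤ V 0 * Real.exp (-((2*c)*t)) := by
    intro t ht
    have h := hanti2 self_mem_Ici ht ht
    simp only [mul_zero, Real.exp_zero, mul_one] at h
    have h2 : 0 < Real.exp ((2*c)*t) := Real.exp_pos _
    rw [Real.exp_neg]
    have hdiv : V t ≤ V 0 / Real.exp ((2*c)*t) := (le_div_iff₀ h2).2 h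
    rwa [div_eq_mul_inv] at hdiv
  have hupper : Tendsto (fun t => V 0 * Real.exp (-((2*c)*t))) atTop (𝓝 0) := by
    have hexp0 : Tendsto (fun t : ℝ => Real.exp (-((2*c)*t))) atTop (𝓝 0) := by
      apply Real.tendsto_exp_atBot.comp
      have h1 : Tendsto (fun t : ℝ => (2*c)*t) atTop atTop :=
        Tendsto.const_mul_atTop (by positivity) tendsto_id
      exact tendsto_neg_atTop_atBot.comp h1
    have := hexp0.const_mul (V 0)
    simpa using this
  have hVto : Tendsto V atTop (𝓝 0) := by
    apply squeeze_zero' (Eventually.of_forall hVnn)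
    · filter_upwards [eventually_ge_atTop (0:ℝ)] with t ht
      exact hVexp t ht
    · exact hupper
  rw [tendsto_iff_dist_tendsto_zero]
  have hb : ∀ t : ℝ, dist (z t) ((0:ℝ),(0:ℝ)) ≤ Real.sqrt (V t) := by
    intro t
    rw [Prod.dist_eq, Real.dist_eq, Real.dist_eq, sub_zero, sub_zero]
    apply max_le
    · rw [← Real.sqrt_sq_eq_abs]
      exact Real.sqrt_le_sqrt (le_add_of_nonneg_right (sq_nonneg _))
    · rw [← Real.sqrt_sq_eq_abs]
      exact Real.sqrt_le_sqrt (le_add_of_nonneg_left (sq_nonneg _))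
  apply squeeze_zero (fun t => dist_nonneg) hb
  exact (Real.continuous_sqrt.tendsto' 0 0 Real.sqrt_zero).comp hVto

/-- Local convergence: if `f : [-1,1]² → ℝ` is `C²`, has a critical point at the origin,
neither `f(0,·)` nor `f(·,0)` is constant, and `f` satisfies the two-sided PL condition with
constant `C`, then there is `r > 0` such that every GDA flow starting in the open Euclidean
ball of radius `r` around the origin converges to the origin. -/
theorem statement_2 (f : ℝ × ℝ → ℝ) (C : ℝ)
    (hf : ContDiffOn ℝ 2 f Sq)
    (hcrit : pdx f (0, 0) = 0 ∧ pdy f (0, 0) = 0)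
    (hncy : ∃ y₁ ∈ Icc (-1 : ℝ) 1, ∃ y₂ ∈ Icc (-1 : ℝ) 1, f (0, y₁) ≠ f (0, y₂))
    (hncx : ∃ x₁ ∈ Icc (-1 : ℝ) 1, ∃ x₂ ∈ Icc (-1 : ℝ) 1, f (x₁, 0) ≠ f (x₂, 0))
    (hPL : ∀ p ∈ Sq,
      f p - sInf ((fun x' => f (x', p.2)) '' Icc (-1 : ℝ) 1) ≤ C * (pdx f p) ^ 2 ∧
      sSup ((fun y' => f (p.1, y')) '' Icc (-1 : ℝ) 1) - f p ≤ C * (pdy f p) ^ 2) :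
    ∃ r > 0, ∀ z : ℝ → ℝ × ℝ,
      (z 0).1 ^ 2 + (z 0).2 ^ 2 < r ^ 2 →
      (∀ t ∈ Ici (0 : ℝ), z t ∈ Sq ∧
        HasDerivWithinAt z (-(pdx f (z t)), pdy f (z t)) (Ici 0) t) →
      Tendsto z atTop (nhds (0, 0)) := by
  obtain ⟨hcx, hcy⟩ := hcrit
  have h0I : (0:ℝ) ∈ Icc (-1:ℝ) 1 := by norm_num
  have h00Sq : ((0:ℝ),(0:ℝ)) ∈ Sq := ⟨h0I, h0I⟩
  -- x slice
  have hmx : MapsTo (fun x : ℝ => (x, (0:ℝ))) (Icc (-1:ℝ) 1) Sq := fun x hx => ⟨hx, h0I⟩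
  set gx : ℝ → ℝ := fun x => f (x, 0) - f (0, 0) with hgxdef
  have hgxc : ContDiffOn ℝ 2 gx (Icc (-1:ℝ) 1) := by
    apply ContDiffOn.sub _ contDiffOn_const
    exact hf.comp ((contDiff_id.prodMk contDiff_const).contDiffOn) hmx
  have hdgx : ∀ x : ℝ, deriv gx x = pdx f (x, 0) := by
    intro x
    show deriv (fun x' => f (x', 0) - f (0,0)) x = _
    rw [deriv_sub_const]
    rfl
  have hscx : ContinuousOn (fun x' : ℝ => f (x', (0:ℝ))) (Icc (-1:ℝ) 1) :=
    hf.continuousOn.comp (by fun_prop) hmx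
  have hbddx : BddBelow ((fun x' : ℝ => f (x', (0:ℝ))) '' Icc (-1:ℝ) 1) :=
    isCompact_Icc.bddBelow_image hscx
  have hInfle : sInf ((fun x' : ℝ => f (x', (0:ℝ))) '' Icc (-1:ℝ) 1) ≤ f (0,0) :=
    csInf_le hbddx ⟨0, h0I, rfl⟩
  have hleInf : f (0,0) ≤ sInf ((fun x' : ℝ => f (x', (0:ℝ))) '' Icc (-1:ℝ) 1) := by
    have h := (hPL (0,0) h00Sq).1
    rw [hcx] at h
    norm_num at h
    exact h
  have hnnx : ∀ x ∈ Icc (-1:ℝ) 1, 0 ≤ gx x := by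
    intro x hx
    have h1 : sInf ((fun x' : ℝ => f (x', (0:ℝ))) '' Icc (-1:ℝ) 1) ≤ f (x, 0) :=
      csInf_le hbddx ⟨x, hx, rfl⟩
    simp only [hgxdef]
    linarith
  have hPLx : ∀ x ∈ Icc (-1:ℝ) 1, gx x ≤ C * (deriv gx x)^2 := by
    intro x hx
    have h := (hPL (x,0) ⟨hx, h0I⟩).1
    rw [hdgx]
    simp only [hgxdef]
    have : f (x,0) - f (0,0) ≤ f (x,0) - sInf ((fun x' : ℝ => f (x', (0:ℝ))) '' Icc (-1:ℝ) 1) := by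
      linarith
    exact le_trans this h
  have hexx : ∃ x ∈ Icc (-1:ℝ) 1, gx x ≠ 0 := by
    obtain ⟨x₁, h₁, x₂, h₂, hne⟩ := hncx
    by_contra hall
    push_neg at hall
    have e1 := hall x₁ h₁
    have e2 := hall x₂ h₂
    simp only [hgxdef, sub_eq_zero] at e1 e2
    exact hne (e1.trans e2.symm)
  obtain ⟨hCpos, hAx⟩ := slice_bound hgxc (by simp [hgxdef]) hnnx hPLx hexx
  -- y slice
  have hmy : MapsTo (fun y : ℝ => ((0:ℝ), y)) (Icc (-1:ℝ) 1) Sq := fun y hy => ⟨h0I, hy⟩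
  set gy : ℝ → ℝ := fun y => f (0, 0) - f (0, y) with hgydef
  have hgyc : ContDiffOn ℝ 2 gy (Icc (-1:ℝ) 1) := by
    apply ContDiffOn.sub contDiffOn_const
    exact hf.comp ((contDiff_const.prodMk contDiff_id).contDiffOn) hmy
  have hdgy : ∀ y : ℝ, deriv gy y = -(pdy f (0, y)) := by
    intro y
    show deriv (fun y' => f (0,0) - f (0, y')) y = _
    rw [deriv_const_sub]
    rfl
  have hscy : ContinuousOn (fun y' : ℝ => f ((0:ℝ), y')) (Icc (-1:ℝ) 1) :=
    hf.continuousOn.comp (by fun_prop) hmy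
  have hbddy : BddAbove ((fun y' : ℝ => f ((0:ℝ), y')) '' Icc (-1:ℝ) 1) :=
    isCompact_Icc.bddAbove_image hscy
  have hSuple : f (0,0) ≤ sSup ((fun y' : ℝ => f ((0:ℝ), y')) '' Icc (-1:ℝ) 1) :=
    le_csSup hbddy ⟨0, h0I, rfl⟩
  have hleSup : sSup ((fun y' : ℝ => f ((0:ℝ), y')) '' Icc (-1:ℝ) 1) ≤ f (0,0) := by
    have h := (hPL (0,0) h00Sq).2
    rw [hcy] at h
    norm_num at h
    exact h
  have hnny : ∀ y ∈ Icc (-1:ℝ) 1, 0 ≤ gy y := by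
    intro y hy
    have h1 : f (0, y) ≤ sSup ((fun y' : ℝ => f ((0:ℝ), y')) '' Icc (-1:ℝ) 1) :=
      le_csSup hbddy ⟨y, hy, rfl⟩
    simp only [hgydef]
    linarith
  have hPLy : ∀ y ∈ Icc (-1:ℝ) 1, gy y ≤ C * (deriv gy y)^2 := by
    intro y hy
    have h := (hPL (0,y) ⟨h0I, hy⟩).2
    rw [hdgy, neg_sq]
    simp only [hgydef]
    calc f (0,0) - f (0,y) ≤ sSup ((fun y' : ℝ => f ((0:ℝ), y')) '' Icc (-1:ℝ) 1) - f (0,y) := by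
          linarith
      _ ≤ C * pdy f (0,y)^2 := h
  have hexy : ∃ y ∈ Icc (-1:ℝ) 1, gy y ≠ 0 := by
    obtain ⟨y₁, h₁, y₂, h₂, hne⟩ := hncy
    by_contra hall
    push_neg at hall
    have e1 := hall y₁ h₁
    have e2 := hall y₂ h₂
    simp only [hgydef, sub_eq_zero] at e1 e2
    exact hne (e1.symm.trans e2)
  obtain ⟨-, hAy⟩ := slice_bound hgyc (by simp [hgydef]) hnny hPLy hexy
  -- interior smoothness at origin
  have hSqnhds : Sq ∈ 𝓝 ((0:ℝ),(0:ℝ)) := by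
    have hopen : IsOpen (Ioo (-1:ℝ) 1 ×ˢ Ioo (-1:ℝ) 1) := isOpen_Ioo.prod isOpen_Ioo
    apply mem_nhds_iff.2
    refine ⟨Ioo (-1:ℝ) 1 ×ˢ Ioo (-1:ℝ) 1,
      fun p hp => ⟨Ioo_subset_Icc_self hp.1, Ioo_subset_Icc_self hp.2⟩, hopen, ?_⟩
    constructor <;> constructor <;> norm_num
  have hf00 : ContDiffAt ℝ 2 f ((0:ℝ),(0:ℝ)) := hf.contDiffAt hSqnhds
  obtain ⟨u, hu_nhds, hu⟩ := hf00.contDiffOn le_rfl (by norm_num)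
  obtain ⟨u', hu'sub, hu'open, hu'mem⟩ := mem_nhds_iff.1 hu_nhds
  have hu'nhds : u' ∈ 𝓝 ((0:ℝ),(0:ℝ)) := hu'open.mem_nhds hu'mem
  have hfd : ∀ p ∈ u', HasFDerivAt f (fderiv ℝ f p) p := by
    intro p hp
    exact (((hu.mono hu'sub).differentiableOn (by norm_num)).differentiableAt
      (hu'open.mem_nhds hp)).hasFDerivAt
  set G := fderiv ℝ f with hGdef
  have hGc : ContDiffAt ℝ 1 G ((0:ℝ),(0:ℝ)) := hf00.fderiv_right (by norm_num)
  set H := fderiv ℝ G ((0:ℝ),(0:ℝ)) with hHdef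
  have hH : HasFDerivAt G H ((0:ℝ),(0:ℝ)) := (hGc.differentiableAt (by norm_num)).hasFDerivAt
  have hsymm := second_derivative_symmetric_of_eventually
    (Filter.eventually_of_mem hu'nhds hfd) hH
  have hpdx : ∀ p ∈ u', pdx f p = G p (1, 0) := by
    intro p hp
    have hline : HasDerivAt (fun t : ℝ => (t, p.2)) ((1:ℝ),(0:ℝ)) p.1 :=
      (hasDerivAt_id p.1).prodMk (hasDerivAt_const p.1 p.2)
    have h2 := (hfd p hp).comp_hasDerivAt p.1 hline
    exact h2.deriv.symm ▸ rfl
  have hpdy : ∀ p ∈ u', pdy f p = G p (0, 1) := by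
    intro p hp
    have hline : HasDerivAt (fun t : ℝ => (p.1, t)) ((0:ℝ),(1:ℝ)) p.2 :=
      (hasDerivAt_const p.2 p.1).prodMk (hasDerivAt_id p.2)
    have h2 := (hfd p hp).comp_hasDerivAt p.2 hline
    exact h2.deriv.symm ▸ rfl
  -- identify second derivatives of the slices
  have hevx : ∀ᶠ x : ℝ in 𝓝 (0:ℝ), (x, (0:ℝ)) ∈ u' := by
    have hc : ContinuousAt (fun x : ℝ => (x, (0:ℝ))) 0 := by fun_prop
    exact hc.preimage_mem_nhds hu'nhds
  have heq1 : (deriv gx) =ᶠ[𝓝 (0:ℝ)] fun x => G (x, 0) (1, 0) := by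
    filter_upwards [hevx] with x hx
    rw [hdgx x, hpdx _ hx]
  have hlin0x : HasDerivAt (fun x : ℝ => (x, (0:ℝ))) ((1:ℝ),(0:ℝ)) 0 :=
    (hasDerivAt_id 0).prodMk (hasDerivAt_const 0 0)
  have hGx : HasDerivAt (fun x : ℝ => G (x, (0:ℝ))) (H (1,0)) 0 :=
    hH.comp_hasDerivAt (f := fun x : ℝ => (x, (0:ℝ))) 0 hlin0x
  have hGx1 : HasDerivAt (fun x : ℝ => G (x, (0:ℝ)) (1,0)) (H (1,0) (1,0)) 0 :=
    (ContinuousLinearMap.apply ℝ ℝ ((1:ℝ),(0:ℝ))).hasFDerivAt.comp_hasDerivAt 0 hGx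
  have hHxx : deriv (deriv gx) 0 = H (1,0) (1,0) := by
    rw [heq1.deriv_eq]
    exact hGx1.deriv
  have hevy : ∀ᶠ y : ℝ in 𝓝 (0:ℝ), ((0:ℝ), y) ∈ u' := by
    have hc : ContinuousAt (fun y : ℝ => ((0:ℝ), y)) 0 := by fun_prop
    exact hc.preimage_mem_nhds hu'nhds
  have heq2 : (deriv gy) =ᶠ[𝓝 (0:ℝ)] fun y => -(G (0, y) (0, 1)) := by
    filter_upwards [hevy] with y hy
    rw [hdgy y, hpdy _ hy]
  have hlin0y : HasDerivAt (fun y : ℝ => ((0:ℝ), y)) ((0:ℝ),(1:ℝ)) 0 :=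
    (hasDerivAt_const 0 0).prodMk (hasDerivAt_id 0)
  have hGy : HasDerivAt (fun y : ℝ => G ((0:ℝ), y)) (H (0,1)) 0 :=
    hH.comp_hasDerivAt (f := fun y : ℝ => ((0:ℝ), y)) 0 hlin0y
  have hGy1 : HasDerivAt (fun y : ℝ => G ((0:ℝ), y) (0,1)) (H (0,1) (0,1)) 0 :=
    (ContinuousLinearMap.apply ℝ ℝ ((0:ℝ),(1:ℝ))).hasFDerivAt.comp_hasDerivAt 0 hGy
  have hHyy : deriv (deriv gy) 0 = -(H (0,1) (0,1)) := by
    rw [heq2.deriv_eq]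
    exact hGy1.neg.deriv
  have hA : 1/(2*C) ≤ H (1,0) (1,0) := hHxx ▸ hAx
  have hD : H (0,1) (0,1) ≤ -(1/(2*C)) := by
    rw [hHyy] at hAy
    linarith
  -- quadratic decay estimate near the origin
  have hG00x : G ((0:ℝ),(0:ℝ)) (1,0) = 0 := by rw [← hpdx _ hu'mem]; exact hcx
  have hG00y : G ((0:ℝ),(0:ℝ)) (0,1) = 0 := by rw [← hpdy _ hu'mem]; exact hcy
  have hnorm10 : ‖((1:ℝ),(0:ℝ))‖ = 1 := by
    rw [Prod.norm_def]; norm_num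
  have hnorm01 : ‖((0:ℝ),(1:ℝ))‖ = 1 := by
    rw [Prod.norm_def]; norm_num
  have hdec : ∀ v : ℝ×ℝ, H v = v.1 • H (1,0) + v.2 • H (0,1) := by
    intro v
    have hv : v = v.1 • ((1:ℝ),(0:ℝ)) + v.2 • ((0:ℝ),(1:ℝ)) := by
      refine Prod.ext_iff.2 ⟨?_, ?_⟩ <;> simp
    conv_lhs => rw [hv]
    rw [map_add, map_smul, map_smul]
  have hCpos8 : (0:ℝ) < 1/(8*C) := by positivity
  have hlo := hH.isLittleO.def hCpos8
  have hquad : ∀ᶠ p : ℝ×ℝ in 𝓝 ((0:ℝ),(0:ℝ)),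
      -(p.1) * pdx f p + p.2 * pdy f p ≤ -(1/(4*C)) * (p.1^2 + p.2^2) := by
    filter_upwards [hlo, Filter.eventually_of_mem hu'nhds (fun p hp => hp)] with p hEp hpu
    have hsub0 : p - ((0:ℝ),(0:ℝ)) = p := by
      refine Prod.ext_iff.2 ⟨?_, ?_⟩ <;> simp
    rw [hsub0] at hEp
    set E := G p - G ((0:ℝ),(0:ℝ)) - H p with hEdef
    have hEnorm : ‖E‖ ≤ 1/(8*C) * ‖p‖ := hEp
    have hGpx : G p (1,0) = H p (1,0) + E (1,0) := by
      simp only [hEdef, ContinuousLinearMap.sub_apply, hG00x]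
      ring
    have hGpy : G p (0,1) = H p (0,1) + E (0,1) := by
      simp only [hEdef, ContinuousLinearMap.sub_apply, hG00y]
      ring
    have hHpx : H p (1,0) = p.1 * (H (1,0) (1,0)) + p.2 * (H (0,1) (1,0)) := by
      rw [hdec p]
      simp [smul_eq_mul]
    have hHpy : H p (0,1) = p.1 * (H (1,0) (0,1)) + p.2 * (H (0,1) (0,1)) := by
      rw [hdec p]
      simp [smul_eq_mul]
    have hsym12 : H (1,0) (0,1) = H (0,1) (1,0) := hsymm _ _
    have hE1 : |E (1,0)| ≤ 1/(8*C) * ‖p‖ := by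
      calc |E (1,0)| = ‖E (1,0)‖ := (Real.norm_eq_abs _).symm
        _ ≤ ‖E‖ * ‖((1:ℝ),(0:ℝ))‖ := E.le_opNorm _
        _ = ‖E‖ := by rw [hnorm10, mul_one]
        _ ≤ 1/(8*C) * ‖p‖ := hEnorm
    have hE2 : |E (0,1)| ≤ 1/(8*C) * ‖p‖ := by
      calc |E (0,1)| = ‖E (0,1)‖ := (Real.norm_eq_abs _).symm
        _ ≤ ‖E‖ * ‖((0:ℝ),(1:ℝ))‖ := E.le_opNorm _
        _ = ‖E‖ := by rw [hnorm01, mul_one]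
        _ ≤ 1/(8*C) * ‖p‖ := hEnorm
    have hxn : |p.1| ≤ ‖p‖ := by rw [← Real.norm_eq_abs]; exact norm_fst_le p
    have hyn : |p.2| ≤ ‖p‖ := by rw [← Real.norm_eq_abs]; exact norm_snd_le p
    have hnp : ‖p‖^2 ≤ p.1^2 + p.2^2 := by
      rw [Prod.norm_def]
      rcases le_total ‖p.1‖ ‖p.2‖ with h | h
      · rw [sup_eq_right.2 h, Real.norm_eq_abs, sq_abs]
        nlinarith [sq_nonneg p.1]
      · rw [sup_eq_left.2 h, Real.norm_eq_abs, sq_abs]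
        nlinarith [sq_nonneg p.2]
    have herr : -(p.1) * E (1,0) + p.2 * E (0,1) ≤ 1/(4*C) * (p.1^2 + p.2^2) := by
      have h1 : -(p.1) * E (1,0) ≤ |p.1| * |E (1,0)| := by
        calc -(p.1) * E (1,0) ≤ |(-(p.1)) * E (1,0)| := le_abs_self _
          _ = |p.1| * |E (1,0)| := by rw [abs_mul, abs_neg]
      have h2 : p.2 * E (0,1) ≤ |p.2| * |E (0,1)| := by
        calc p.2 * E (0,1) ≤ |p.2 * E (0,1)| := le_abs_self _
          _ = |p.2| * |E (0,1)| := abs_mul _ _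
      have h3 : |p.1| * |E (1,0)| ≤ ‖p‖ * (1/(8*C) * ‖p‖) :=
        mul_le_mul hxn hE1 (abs_nonneg _) (norm_nonneg _)
      have h4 : |p.2| * |E (0,1)| ≤ ‖p‖ * (1/(8*C) * ‖p‖) :=
        mul_le_mul hyn hE2 (abs_nonneg _) (norm_nonneg _)
      have h5 : ‖p‖ * (1/(8*C) * ‖p‖) + ‖p‖ * (1/(8*C) * ‖p‖) = 1/(4*C) * ‖p‖^2 := by
        ring
      have h6 : 1/(4*C) * ‖p‖^2 ≤ 1/(4*C) * (p.1^2 + p.2^2) := by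
        apply mul_le_mul_of_nonneg_left hnp (by positivity)
      linarith
    have hgoal : -(p.1) * pdx f p + p.2 * pdy f p =
        -(H (1,0) (1,0) * p.1^2) + H (0,1) (0,1) * p.2^2
          + (-(p.1) * E (1,0) + p.2 * E (0,1)) := by
      rw [hpdx _ hpu, hpdy _ hpu, hGpx, hGpy, hHpx, hHpy, hsym12]
      ring
    rw [hgoal]
    have hb1 : 1/(2*C) * p.1^2 ≤ H (1,0) (1,0) * p.1^2 :=
      mul_le_mul_of_nonneg_right hA (sq_nonneg _)
    have hb2 : H (0,1) (0,1) * p.2^2 ≤ -(1/(2*C)) * p.2^2 :=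
      mul_le_mul_of_nonneg_right hD (sq_nonneg _)
    have hiden : 1/(2*C) * p.1^2 + 1/(2*C) * p.2^2 - 1/(4*C)*(p.1^2+p.2^2)
        = 1/(4*C)*(p.1^2+p.2^2) := by ring
    linarith [herr, hb1, hb2, hiden]
  obtain ⟨ρ, hρpos, hballρ⟩ := Metric.eventually_nhds_iff.1 hquad
  have hball : ∀ p : ℝ×ℝ, p.1^2 + p.2^2 < ρ^2 →
      -(p.1) * pdx f p + p.2 * pdy f p ≤ -(1/(4*C)) * (p.1^2 + p.2^2) := by
    intro p hp
    apply hballρ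
    rw [Prod.dist_eq, Real.dist_eq, Real.dist_eq, sub_zero, sub_zero]
    have h1 : |p.1| < ρ := by
      apply abs_lt_of_sq_lt_sq _ hρpos.le
      nlinarith [sq_nonneg p.2]
    have h2 : |p.2| < ρ := by
      apply abs_lt_of_sq_lt_sq _ hρpos.le
      nlinarith [sq_nonneg p.1]
    exact max_lt h1 h2
  refine ⟨ρ, hρpos, ?_⟩
  intro z hz0 hz
  exact dynamics_lemma f (1/(4*C)) ρ (by positivity) hρpos hball z hz0 hz
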